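/- Nonnegative advantage of the max⁺-following policy: for every 0 ≤ t < H and every s ∈ S, the max⁺-following policy π° satisfies A^{f⁺}_t(s, π°) ≥ 0, i.e. E_{a∼π^{k*(t,s)}_t(s)}[ r(s,a) + E_{s'∼P(s,a)}[ f⁺_{t+1}(s') ] ] ≥ f⁺_t(s). -/

import Mathlib

open scoped BigOperators

/-- Expectation of a real-valued function under a probability mass function on a finite type. -/
noncomputable def pexp {α : Type*} [Fintype α] (p : PMF α) (f : α → ℝ) : ℝ :=
  ∑ a, (p a).toReal * f a

lemma pexp_mono {α : Type*} [Fintype α] (p : PMF α) {f g : α → ℝ} (h : ∀ a, f a ≤ g a) :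
    pexp p f ≤ pexp p g := by
  apply Finset.sum_le_sum
  intro a _
  exact mul_le_mul_of_nonneg_left (h a) ENNReal.toReal_nonneg

lemma pexp_sum_one {α : Type*} [Fintype α] (p : PMF α) : ∑ a, (p a).toReal = 1 := by
  have h := p.tsum_coe
  rw [tsum_fintype] at h
  have : (∑ a, p a).toReal = 1 := by rw [h]; simp
  rwa [ENNReal.toReal_sum (fun a _ => (p.apply_ne_top a))] at this

lemma pexp_sub_const {α : Type*} [Fintype α] (p : PMF α) (f : α → ℝ) (c : ℝ) :
    pexp p (fun a => f a - c) = pexp p f - c := by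
  unfold pexp
  simp only [mul_sub]
  rw [Finset.sum_sub_distrib, ← Finset.sum_mul, pexp_sum_one, one_mul]

theorem maxplus_following_nonneg_advantage
    {S A : Type*} [Fintype S] [Nonempty S] [Fintype A] [Nonempty A]
    (P : S → A → PMF S) (r : S → A → ℝ)
    (hr : ∀ s a, 0 ≤ r s a ∧ r s a ≤ 1)
    (H : ℕ)
    (K : ℕ) (hK : 1 ≤ K)
    (πs : Fin K → ℕ → S → PMF A)
    (Vs : Fin K → ℕ → S → ℝ)
    (hVsH : ∀ k s, Vs k H s = 0)
    (hVs : ∀ k t, t < H → ∀ s,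
      Vs k t s = pexp (πs k t s) (fun a => r s a + pexp (P s a) (Vs k (t + 1))))
    (fplus : ℕ → S → ℝ)
    (hfplus : ∀ t s, fplus t s = ⨆ k : Fin K, Vs k t s)
    (kstar : ℕ → S → Fin K)
    (hkstar : ∀ t s, Vs (kstar t s) t s = fplus t s) :
    ∀ t, t < H → ∀ s,
      0 ≤ pexp (πs (kstar t s) t s)
            (fun a => r s a + pexp (P s a) (fplus (t + 1)) - fplus t s) := by
  intro t ht s
  set k := kstar t s with hk
  have hle : ∀ s', Vs k (t + 1) s' ≤ fplus (t + 1) s' := by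
    intro s'
    rw [hfplus]
    haveI : Nonempty (Fin K) := ⟨⟨0, hK⟩⟩
    exact le_ciSup (f := fun j : Fin K => Vs j (t + 1) s') (Set.Finite.bddAbove (Set.finite_range _)) k
  have key : fplus t s ≤ pexp (πs k t s) (fun a => r s a + pexp (P s a) (fplus (t + 1))) := by
    rw [← hkstar t s, hVs k t ht s]
    apply pexp_mono
    intro a
    exact add_le_add le_rfl (pexp_mono (P s a) hle)
  rw [show (fun a => r s a + pexp (P s a) (fplus (t + 1)) - fplus t s)
      = (fun a => (r s a + pexp (P s a) (fplus (t + 1))) - fplus t s) from rfl,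
    pexp_sub_const]
  linarith
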